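/- Let R be a commutative ring, r ∈ R, and D_1 ← D_2 ← D_3 ← ⋯ a projective system of R-modules such that r^n annihilates D_n for every n ≥ 1. Then both lim_n D_n and lim^1_n D_n (the derived inverse limit) are r-contramodule R-modules, i.e., Hom_R(R[r^{-1}], −) and Ext^1_R(R[r^{-1}], −) vanish on them. -/

import Mathlib

open CategoryTheory

section

variable (R : Type) [CommRing R]
  (D : ℕ → Type) [∀ n, AddCommGroup (D n)] [∀ n, Module R (D n)]
  (f : ∀ n : ℕ, D (n + 1) →ₗ[R] D n)

/-- The inverse limit of the tower `D 0 ← D 1 ← D 2 ← ⋯`, realized as the submodule of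
compatible families in the product. -/
def towerLim : Submodule R (∀ n, D n) where
  carrier := {g | ∀ n : ℕ, f n (g (n + 1)) = g n}
  add_mem' := by
    intro a b ha hb n
    simp only [Pi.add_apply, map_add, ha n, hb n]
  zero_mem' := by
    intro n
    simp
  smul_mem' := by
    intro c a ha n
    simp only [Pi.smul_apply, map_smul, ha n]

/-- The map `∏ D_n → ∏ D_n`, `(x_n) ↦ (x_n − f_n(x_{n+1}))`, whose kernel is `lim D_n` and
whose cokernel is `lim¹ D_n`. -/
def towerDiff : (∀ n, D n) →ₗ[R] (∀ n, D n) where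
  toFun g := fun n => g n - f n (g (n + 1))
  map_add' g h := by
    funext n
    simp only [Pi.add_apply, map_add]
    abel
  map_smul' c g := by
    funext n
    simp only [Pi.smul_apply, map_smul, smul_sub, RingHom.id_apply]

/-- The derived inverse limit `lim¹` of the tower `D 0 ← D 1 ← D 2 ← ⋯`, defined as the
cokernel of the map `(x_n) ↦ (x_n − f_n(x_{n+1}))` on the product. -/
abbrev towerLim1 : Type :=
  (∀ n, D n) ⧸ LinearMap.range (towerDiff R D f)

end

namespace Statement18

noncomputable section Aux

variable (R : Type) [CommRing R] (r : R)

abbrev LL := Localization.Away r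

def pw (n : ℕ) : Submonoid.powers r := ⟨r ^ n, n, rfl⟩

def one_over (n : ℕ) : LL R r := Localization.mk 1 (pw R r n)

def shiftF : (ℕ →₀ R) →ₗ[R] (ℕ →₀ R) := Finsupp.lmapDomain R R Nat.succ

def deltaF : (ℕ →₀ R) →ₗ[R] (ℕ →₀ R) := LinearMap.id - r • shiftF R

lemma deltaF_single (n : ℕ) (a : R) :
    deltaF R r (Finsupp.single n a) =
      Finsupp.single n a - r • Finsupp.single (n + 1) a := by
  simp [deltaF, shiftF, Finsupp.lmapDomain, Finsupp.mapDomain_single]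

lemma deltaF_apply_zero (x : ℕ →₀ R) : deltaF R r x 0 = x 0 := by
  simp [deltaF, shiftF, Finsupp.lmapDomain]
  rw [Finsupp.mapDomain_notin_range]
  · ring
  · rintro ⟨m, hm⟩; exact Nat.succ_ne_zero m hm

lemma deltaF_apply_succ (x : ℕ →₀ R) (m : ℕ) :
    deltaF R r x (m + 1) = x (m + 1) - r * x m := by
  simp only [deltaF, shiftF, Finsupp.lmapDomain, LinearMap.sub_apply, LinearMap.id_apply,
    LinearMap.smul_apply, LinearMap.coe_mk, AddHom.coe_mk, Finsupp.coe_sub, Finsupp.coe_smul,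
    Pi.sub_apply, Pi.smul_apply, smul_eq_mul]
  rw [show ((m:ℕ)+1) = Nat.succ m from rfl, Finsupp.mapDomain_apply Nat.succ_injective]

lemma deltaF_injective : Function.Injective (deltaF R r) := by
  rw [injective_iff_map_eq_zero]
  intro x hx
  ext m
  induction m with
  | zero =>
      have := DFunLike.congr_fun hx 0
      simpa [deltaF_apply_zero] using this
  | succ m ih =>
      have := DFunLike.congr_fun hx (m + 1)
      simp only [deltaF_apply_succ, Finsupp.coe_zero, Pi.zero_apply] at this
      simp only [Finsupp.coe_zero, Pi.zero_apply] at ih ⊢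
      have : x (m+1) = r * x m := by linear_combination this
      rw [this, ih, mul_zero]

def piF : (ℕ →₀ R) →ₗ[R] LL R r := Finsupp.lift (LL R r) R ℕ (fun n => one_over R r n)

lemma piF_single (n : ℕ) (a : R) : piF R r (Finsupp.single n a) = Localization.mk a (pw R r n) := by
  simp [piF, one_over]
  rw [Localization.smul_mk]
  simp

lemma one_over_eq (n : ℕ) : one_over R r n = r • one_over R r (n + 1) := by
  rw [one_over, one_over, Localization.smul_mk]
  rw [Localization.mk_eq_mk_iff, Localization.r_iff_exists]
  refine ⟨1, ?_⟩
  simp only [pw, Submonoid.mk_mul_mk, OneMemClass.coe_one, one_mul, pow_succ,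
    smul_eq_mul]
  ring

lemma piF_comp_deltaF : (piF R r).comp (deltaF R r) = 0 := by
  apply Finsupp.lhom_ext
  intro n a
  simp only [LinearMap.comp_apply, deltaF_single, map_sub, map_smul, piF_single,
    LinearMap.zero_apply]
  rw [Localization.smul_mk, sub_eq_zero, Localization.mk_eq_mk_iff, Localization.r_iff_exists]
  refine ⟨1, ?_⟩
  simp only [pw, Submonoid.mk_mul_mk, OneMemClass.coe_one, one_mul, pow_succ,
    smul_eq_mul]
  ring

lemma piF_surjective : Function.Surjective (piF R r) := by
  intro z
  induction z using Localization.induction_on with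
  | H p =>
    obtain ⟨a, s⟩ := p
    obtain ⟨n, hn⟩ := s.2
    refine ⟨Finsupp.single n a, ?_⟩
    rw [piF_single]
    congr 1
    exact Subtype.ext hn

end Aux

section Aux2
variable (R : Type) [CommRing R] (r : R)

lemma key_mem (a : R) (n j : ℕ) :
    Finsupp.single n a - Finsupp.single (n + j) (r ^ j * a) ∈ LinearMap.range (deltaF R r) := by
  induction j with
  | zero => simp
  | succ j ih =>
      have heq : Finsupp.single n a - Finsupp.single (n + (j + 1)) (r ^ (j + 1) * a)
          = (Finsupp.single n a - Finsupp.single (n + j) (r ^ j * a))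
            + deltaF R r (Finsupp.single (n + j) (r ^ j * a)) := by
        rw [deltaF_single]
        rw [show r ^ (j + 1) * a = r • (r ^ j * a) by rw [pow_succ, smul_eq_mul]; ring,
          ← Finsupp.smul_single, show n + (j + 1) = n + j + 1 from rfl]
        abel
      rw [heq]
      exact add_mem ih ⟨_, rfl⟩

lemma reduce (x : ℕ →₀ R) :
    ∃ (N : ℕ) (c : R), x - Finsupp.single N c ∈ LinearMap.range (deltaF R r) := by
  induction x using Finsupp.induction with
  | zero => exact ⟨0, 0, by simp⟩
  | single_add n a x _ _ ih =>
      obtain ⟨N, c, hNc⟩ := ih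
      refine ⟨max n N, r ^ (max n N - n) * a + r ^ (max n N - N) * c, ?_⟩
      have h1 := key_mem R r a n (max n N - n)
      have h2 := key_mem R r c N (max n N - N)
      rw [Nat.add_sub_cancel' (le_max_left n N)] at h1
      rw [Nat.add_sub_cancel' (le_max_right n N)] at h2
      have heq : Finsupp.single n a + x - Finsupp.single (max n N)
            (r ^ (max n N - n) * a + r ^ (max n N - N) * c)
          = (Finsupp.single n a - Finsupp.single (max n N) (r ^ (max n N - n) * a))
            + (x - Finsupp.single N c)
            + (Finsupp.single N c - Finsupp.single (max n N) (r ^ (max n N - N) * c)) := by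
        rw [Finsupp.single_add]
        abel
      rw [heq]
      exact add_mem (add_mem h1 hNc) h2

lemma range_le_ker : ∀ y ∈ LinearMap.range (deltaF R r), piF R r y = 0 := by
  rintro y ⟨z, rfl⟩
  exact DFunLike.congr_fun (piF_comp_deltaF R r) z

lemma ker_le_range (x : ℕ →₀ R) (hx : piF R r x = 0) :
    x ∈ LinearMap.range (deltaF R r) := by
  obtain ⟨N, c, h⟩ := reduce R r x
  have hpi : Localization.mk c (pw R r N) = 0 := by
    have := range_le_ker R r _ h
    rw [map_sub, hx, piF_single, zero_sub, neg_eq_zero] at this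
    exact this
  rw [show (0 : LL R r) = Localization.mk 0 1 from (Localization.mk_zero 1).symm,
    Localization.mk_eq_mk_iff, Localization.r_iff_exists] at hpi
  obtain ⟨u, hu⟩ := hpi
  simp only [OneMemClass.coe_one, one_mul, mul_zero] at hu
  obtain ⟨j, hj⟩ := u.2
  have hz : r ^ j * c = 0 := by rw [show r ^ j = (u : R) from hj]; exact hu
  have heq : x = (x - Finsupp.single N c)
      + (Finsupp.single N c - Finsupp.single (N + j) (r ^ j * c)) := by
    rw [hz, Finsupp.single_zero]
    abel
  rw [heq]
  exact add_mem h (key_mem R r c N j)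

end Aux2

noncomputable section Res
variable (R : Type) [CommRing R] (r : R)

open CategoryTheory Limits

def resX : ℕ → ModuleCat R
  | 0 => ModuleCat.of R (ℕ →₀ R)
  | 1 => ModuleCat.of R (ℕ →₀ R)
  | _ => ModuleCat.of R PUnit

def resD : ∀ i j : ℕ, resX R i ⟶ resX R j
  | 1, 0 => ModuleCat.ofHom (deltaF R r)
  | _, _ => 0

def resC : ChainComplex (ModuleCat R) ℕ where
  X := resX R
  d := resD R r
  shape i j h := by
    match i, j with
    | 1, 0 => exact absurd rfl h
    | 0, j => rfl
    | 1, (j+1) => rfl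
    | (i+2), j => rfl
  d_comp_d' i j k hij hjk := by
    simp only [ComplexShape.down_Rel] at hij hjk
    subst hij hjk
    show resD R r (k + 1 + 1) (k + 1) ≫ resD R r (k + 1) k = 0
    rw [show resD R r (k + 1 + 1) (k + 1) = 0 from rfl, zero_comp]

instance resC_projective (n : ℕ) : Projective ((resC R r).X n) := by
  match n with
  | 0 => exact (IsProjective.iff_projective _).mp inferInstance
  | 1 => exact (IsProjective.iff_projective _).mp inferInstance
  | (n+2) => exact (IsProjective.iff_projective _).mp inferInstance

lemma resC_d_1_0 : (resC R r).d 1 0 = ModuleCat.ofHom (deltaF R r) := rfl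

lemma resC_d_comp_pi :
    (resC R r).d 1 0 ≫ ModuleCat.ofHom (piF R r) = 0 := by
  rw [resC_d_1_0]
  ext x
  exact DFunLike.congr_fun (piF_comp_deltaF R r) x

def resPi : resC R r ⟶ (ChainComplex.single₀ (ModuleCat R)).obj (ModuleCat.of R (LL R r)) :=
  (ChainComplex.toSingle₀Equiv _ _).symm ⟨ModuleCat.ofHom (piF R r), resC_d_comp_pi R r⟩

lemma resPi_f_zero : (resPi R r).f 0 = ModuleCat.ofHom (piF R r) :=
  ChainComplex.toSingle₀Equiv_symm_apply_f_zero _ _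

def res : ProjectiveResolution (ModuleCat.of R (LL R r)) where
  complex := resC R r
  π := resPi R r
  quasiIso := ⟨fun n => by
    match n with
    | 0 =>
      rw [ChainComplex.quasiIsoAt₀_iff, ShortComplex.quasiIso_iff_of_zeros' _ rfl rfl rfl]
      have hτ : ((HomologicalComplex.shortComplexFunctor' (ModuleCat R) _ 1 0 0).map
          (resPi R r)).τ₂ = ModuleCat.ofHom (piF R r) := resPi_f_zero R r
      constructor
      · rw [ShortComplex.moduleCat_exact_iff]
        intro x hx
        have hx' : ModuleCat.ofHom (piF R r) x = 0 := by rw [← hτ]; exact hx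
        obtain ⟨y, hy⟩ := ker_le_range R r x hx'
        exact ⟨y, hy⟩
      · rw [hτ]
        exact (ModuleCat.epi_iff_surjective (ModuleCat.ofHom (piF R r))).2 (piF_surjective R r)
    | (n+1) =>
      rw [quasiIsoAt_iff_exactAt']
      · rw [HomologicalComplex.exactAt_iff' _ (n + 2) (n + 1) n (by simp) (by simp)]
        rw [ShortComplex.moduleCat_exact_iff]
        match n with
        | 0 =>
          intro x hx
          have hx' : deltaF R r x = 0 := hx
          have hx0 : x = 0 := deltaF_injective R r (hx'.trans (map_zero _).symm)
          exact ⟨0, by rw [map_zero, hx0]⟩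
        | (m+1) =>
          intro x _
          exact ⟨0, Subsingleton.elim (α := PUnit) _ _⟩
      · apply ChainComplex.exactAt_succ_single_obj⟩

end Res

noncomputable section ExtVanish
open CategoryTheory Limits
variable (R : Type) [CommRing R] (r : R)


lemma subsingleton_of_isZero {M : ModuleCat R} (h : IsZero M) : Subsingleton M := by
  have hid : 𝟙 M = 0 := by rw [← IsZero.iff_id_eq_zero] at *; exact h
  constructor
  intro a b
  have ha := congrArg (fun g : M ⟶ M => g.hom a) hid
  have hb := congrArg (fun g : M ⟶ M => g.hom b) hid
  simp at ha hb
  rw [ha, hb]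

lemma ext_vanish (C : Type) [AddCommGroup C] [Module R C]
    (hsurj : ∀ φ : (ℕ →₀ R) →ₗ[R] C, ∃ ψ : (ℕ →₀ R) →ₗ[R] C, ψ.comp (deltaF R r) = φ) :
    Subsingleton (((Ext R (ModuleCat R) 1).obj
      (Opposite.op (ModuleCat.of R (LL R r)))).obj (ModuleCat.of R C)) := by
  have hz : IsZero ((((res R r).complex).linearYonedaObj R (ModuleCat.of R C)).homology 1) := by
    rw [← HomologicalComplex.exactAt_iff_isZero_homology]
    rw [HomologicalComplex.exactAt_iff' _ 0 1 2 (by simp) (by simp)]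
    rw [ShortComplex.moduleCat_exact_iff]
    intro x _
    obtain ⟨ψ, hψ⟩ := hsurj x.hom
    exact ⟨ModuleCat.ofHom ψ, ModuleCat.hom_ext (LinearMap.ext fun y => DFunLike.congr_fun hψ y)⟩
  have iso := (res R r).isoExt (R := R) 1 (ModuleCat.of R C)
  exact subsingleton_of_isZero R (IsZero.of_iso hz iso)

end ExtVanish

section HomVanish
variable (R : Type) [CommRing R] (r : R)

lemma hom_vanish (C : Type) [AddCommGroup C] [Module R C]
    (hinj : ∀ c : ℕ → C, (∀ n, c n = r • c (n + 1)) → ∀ n, c n = 0) :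
    Subsingleton (LL R r →ₗ[R] C) := by
  constructor
  intro φ ψ
  suffices h : ∀ χ : LL R r →ₗ[R] C, χ = 0 by rw [h φ, h ψ]
  intro χ
  have hc : ∀ n, χ (one_over R r n) = 0 := by
    apply hinj
    intro n
    rw [one_over_eq R r n]
    exact map_smul χ r _
  ext z
  induction z using Localization.induction_on with
  | H p =>
      obtain ⟨a, s⟩ := p
      obtain ⟨n, hn⟩ := s.2
      have hz : Localization.mk a s = a • one_over R r n := by
        rw [one_over, Localization.smul_mk, smul_eq_mul, mul_one]
        congr 1
        exact Subtype.ext hn.symm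
      rw [hz, map_smul, hc n, smul_zero]
      rfl

lemma lift_single (C : Type) [AddCommGroup C] [Module R C] (v : ℕ → C) (n : ℕ) (a : R) :
    Finsupp.lift C R ℕ v (Finsupp.single n a) = a • v n := by
  simp [Finsupp.lift_apply, Finsupp.sum_single_index]

end HomVanish


section Tower

variable {R : Type} [CommRing R] (r : R)
  {D : ℕ → Type} [∀ n, AddCommGroup (D n)] [∀ n, Module R (D n)]
  (f : ∀ n : ℕ, D (n + 1) →ₗ[R] D n)

/-- The explicit inverse of `(c_n) ↦ (c_n - r • c_{n+1})` on sequences in the product. -/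
def Sop (c : ℕ → ∀ m, D m) : ℕ → ∀ m, D m :=
  fun n m => ∑ k ∈ Finset.range (m + 1), r ^ k • c (n + k) m

lemma Sop_TS (hann : ∀ (n : ℕ) (x : D n), r ^ (n + 1) • x = 0) (c : ℕ → ∀ m, D m) (n m : ℕ) :
    Sop r c n m - r • Sop r c (n + 1) m = c n m := by
  have hsm : r • Sop r c (n + 1) m
      = ∑ k ∈ Finset.range (m + 1), r ^ (k + 1) • c (n + (k + 1)) m := by
    rw [Sop, Finset.smul_sum]
    refine Finset.sum_congr rfl (fun k _ => ?_)
    rw [smul_smul, ← pow_succ', Nat.add_right_comm n 1 k]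
    rfl
  rw [hsm, Sop, ← Finset.sum_sub_distrib,
    show (∑ k ∈ Finset.range (m + 1),
        (r ^ k • c (n + k) m - r ^ (k + 1) • c (n + (k + 1)) m))
      = r ^ 0 • c (n + 0) m - r ^ (m + 1) • c (n + (m + 1)) m from
      Finset.sum_range_sub' (fun k => r ^ k • c (n + k) m) (m + 1),
    hann m (c (n + (m + 1)) m)]
  simp

lemma Sop_ST (hann : ∀ (n : ℕ) (x : D n), r ^ (n + 1) • x = 0) (c : ℕ → ∀ m, D m) (n m : ℕ) :
    Sop r (fun j m' => c j m' - r • c (j + 1) m') n m = c n m := by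
  rw [Sop]
  have : ∀ k, r ^ k • (c (n + k) m - r • c (n + k + 1) m)
      = r ^ k • c (n + k) m - r ^ (k + 1) • c (n + (k + 1)) m := by
    intro k
    rw [smul_sub, smul_smul, ← pow_succ]
    rfl
  calc (∑ k ∈ Finset.range (m + 1), r ^ k • (c (n + k) m - r • c (n + k + 1) m))
      = ∑ k ∈ Finset.range (m + 1),
          (r ^ k • c (n + k) m - r ^ (k + 1) • c (n + (k + 1)) m) :=
        Finset.sum_congr rfl (fun k _ => this k)
    _ = r ^ 0 • c (n + 0) m - r ^ (m + 1) • c (n + (m + 1)) m :=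
        Finset.sum_range_sub' (fun k => r ^ k • c (n + k) m) (m + 1)
    _ = c n m := by rw [hann m (c (n + (m + 1)) m)]; simp

lemma Sop_d (hann : ∀ (n : ℕ) (x : D n), r ^ (n + 1) • x = 0) (u : ℕ → ∀ m, D m) (n : ℕ) :
    towerDiff R D f (Sop r u n) = Sop r (fun j => towerDiff R D f (u j)) n := by
  funext m
  show Sop r u n m - f m (Sop r u n (m + 1))
    = ∑ k ∈ Finset.range (m + 1), r ^ k • (u (n + k) m - f m (u (n + k) (m + 1)))
  have h1 : f m (Sop r u n (m + 1))
      = ∑ k ∈ Finset.range (m + 2), r ^ k • f m (u (n + k) (m + 1)) := by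
    rw [Sop, map_sum]
    exact Finset.sum_congr rfl (fun k _ => by rw [map_smul])
  rw [h1, Finset.sum_range_succ, hann m (f m (u (n + (m + 1)) (m + 1))), add_zero, Sop,
    ← Finset.sum_sub_distrib]
  exact Finset.sum_congr rfl (fun k _ => by rw [smul_sub])

lemma Sop_zero (n : ℕ) : Sop r (fun _ => (0 : ∀ m, D m)) n = 0 := by
  funext m
  show (∑ k ∈ Finset.range (m + 1), r ^ k • (0 : ∀ m', D m') m) = 0
  simp

end Tower


section MemIff
variable (R : Type) [CommRing R]
  (D : ℕ → Type) [∀ n, AddCommGroup (D n)] [∀ n, Module R (D n)]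
  (f : ∀ n : ℕ, D (n + 1) →ₗ[R] D n)

lemma towerLim_mem_iff (g : ∀ m, D m) :
    g ∈ towerLim R D f ↔ towerDiff R D f g = 0 := by
  constructor
  · intro h
    funext n
    show g n - f n (g (n + 1)) = 0
    rw [h n, sub_self]
  · intro h n
    have := congrFun h n
    have h2 : g n - f n (g (n + 1)) = 0 := this
    rw [sub_eq_zero] at h2
    exact h2.symm

end MemIff

end Statement18

/-- Let `R` be a commutative ring, `r ∈ R`, and `D_1 ← D_2 ← ⋯` a
projective system of `R`-modules such that `rⁿ` annihilates `D_n` for every `n ≥ 1`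
(here `D n` denotes `D_{n+1}`, so `r^(n+1)` annihilates `D n`).  Then both `lim_n D_n` and
`lim¹_n D_n` are `r`-contramodule `R`-modules: `Hom_R(R[r⁻¹], −)` and `Ext¹_R(R[r⁻¹], −)`
vanish on them. -/
theorem towerLim_and_towerLim1_are_contramodules
    (R : Type) [CommRing R] (r : R)
    (D : ℕ → Type) [∀ n, AddCommGroup (D n)] [∀ n, Module R (D n)]
    (f : ∀ n : ℕ, D (n + 1) →ₗ[R] D n)
    (hann : ∀ (n : ℕ) (x : D n), r ^ (n + 1) • x = 0) :
    Subsingleton (Localization.Away r →ₗ[R] (towerLim R D f)) ∧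
    Subsingleton (((Ext R (ModuleCat R) 1).obj
      (Opposite.op (ModuleCat.of R (Localization.Away r)))).obj
        (ModuleCat.of R (towerLim R D f))) ∧
    Subsingleton (Localization.Away r →ₗ[R] (towerLim1 R D f)) ∧
    Subsingleton (((Ext R (ModuleCat R) 1).obj
      (Opposite.op (ModuleCat.of R (Localization.Away r)))).obj
        (ModuleCat.of R (towerLim1 R D f))) := by
  classical
  open Statement18 in
  refine ⟨?_, ?_, ?_, ?_⟩
  · -- Hom(L, lim) = 0
    apply hom_vanish
    intro c hc n
    obtain ⟨x, hx⟩ : ∃ x : ℕ → ∀ m, D m, ∀ j, ((c j : ∀ m, D m)) = x j := ⟨_, fun j => rfl⟩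
    have hfun : (fun j m' => x j m' - r • x (j + 1) m') = (fun _ => (0 : ∀ m, D m)) := by
      funext j m'
      rw [← hx j, ← hx (j + 1)]
      have h1 : (c j : ∀ m, D m) = r • (c (j + 1) : ∀ m, D m) := by
        rw [hc j, Submodule.coe_smul]
      rw [h1]
      simp
    have h0 : ∀ m, x n m = 0 := by
      intro m
      have hST := Sop_ST r hann x n m
      rw [hfun, Sop_zero] at hST
      exact hST.symm
    exact Subtype.ext (by rw [hx n]; exact funext h0)
  · -- Ext¹(L, lim) = 0
    apply ext_vanish
    intro φ
    obtain ⟨x, hx⟩ : ∃ x : ℕ → ∀ m, D m,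
        ∀ j, ((φ (Finsupp.single j 1) : towerLim R D f) : ∀ m, D m) = x j :=
      ⟨_, fun j => rfl⟩
    have hmem : ∀ n, Sop r x n ∈ towerLim R D f := by
      intro n
      rw [towerLim_mem_iff, Sop_d r f hann x n]
      have hdz : (fun j => towerDiff R D f (x j)) = (fun _ => (0 : ∀ m, D m)) := by
        funext j
        rw [← hx j]
        exact (towerLim_mem_iff R D f _).1 (φ (Finsupp.single j 1)).2
      rw [hdz, Sop_zero]
    refine ⟨Finsupp.lift _ R ℕ (fun n => (⟨Sop r x n, hmem n⟩ : towerLim R D f)), ?_⟩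
    apply Finsupp.lhom_ext
    intro n a
    rw [LinearMap.comp_apply, deltaF_single, map_sub, map_smul, lift_single, lift_single]
    apply Subtype.ext
    have hsa : ((φ (Finsupp.single n a) : towerLim R D f) : ∀ m, D m) = a • x n := by
      rw [show Finsupp.single n a = a • Finsupp.single n (1 : R) by
          rw [Finsupp.smul_single, smul_eq_mul, mul_one], map_smul, Submodule.coe_smul, hx n]
    rw [Submodule.coe_sub, Submodule.coe_smul, Submodule.coe_smul, Submodule.coe_smul, hsa]
    funext m
    simp only [Pi.smul_apply, Pi.sub_apply]
    rw [← Sop_TS r hann x n m, smul_sub, smul_comm r a (Sop r x (n + 1) m)]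
  · -- Hom(L, lim1) = 0
    apply hom_vanish
    intro c hc n
    choose x hx using fun j =>
      Submodule.Quotient.mk_surjective (LinearMap.range (towerDiff R D f)) (c j)
    have hrange : ∀ j, ∃ y, towerDiff R D f y = x j - r • x (j + 1) := by
      intro j
      refine LinearMap.mem_range.mp ?_
      rw [← Submodule.Quotient.mk_eq_zero, Submodule.Quotient.mk_sub,
        Submodule.Quotient.mk_smul, hx j, hx (j + 1), ← hc j, sub_self]
    choose u hu using hrange
    have hx0 : x n ∈ LinearMap.range (towerDiff R D f) := by
      refine ⟨Sop r u n, ?_⟩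
      rw [Sop_d r f hann u n]
      have hfun : (fun j => towerDiff R D f (u j))
          = (fun j m' => x j m' - r • x (j + 1) m') := by
        funext j m'
        rw [hu j]
        simp only [Pi.sub_apply, Pi.smul_apply]
      rw [hfun]
      funext m
      exact Sop_ST r hann x n m
    rw [← hx n]
    exact (Submodule.Quotient.mk_eq_zero _).2 hx0
  · -- Ext¹(L, lim1) = 0
    apply ext_vanish
    intro φ
    choose x hx using fun j =>
      Submodule.Quotient.mk_surjective (LinearMap.range (towerDiff R D f))
        (φ (Finsupp.single j 1))
    refine ⟨Finsupp.lift _ R ℕ (fun n => Submodule.Quotient.mk (Sop r x n)), ?_⟩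
    apply Finsupp.lhom_ext
    intro n a
    rw [LinearMap.comp_apply, deltaF_single, map_sub, map_smul, lift_single, lift_single]
    have hsa : φ (Finsupp.single n a) = Submodule.Quotient.mk (a • x n) := by
      rw [show Finsupp.single n a = a • Finsupp.single n (1 : R) by
          rw [Finsupp.smul_single, smul_eq_mul, mul_one], map_smul, ← hx n,
        Submodule.Quotient.mk_smul]
    rw [hsa]
    simp only [← Submodule.Quotient.mk_smul, ← Submodule.Quotient.mk_sub]
    congr 1
    funext m
    simp only [Pi.smul_apply, Pi.sub_apply]
    rw [← Sop_TS r hann x n m, smul_sub, smul_comm r a (Sop r x (n + 1) m)]
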